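/- Let q = p^u be a prime power and let p^v be the highest power of p dividing n. If 0 ≤ v − uh < u/2 for some integer h ≥ 1, then there exists a maximal set of (q^h−1)^2/(q−1) mutually orthogonal frequency squares of type (n; n/q). -/

import Mathlib

set_option linter.unusedSectionVars false

open Finset

section Counting

variable {α β γ : Type*} [Fintype α] [Fintype β]

/-- fibers of a surjective additive hom between finite groups all have the same size -/
lemma fiber_card_mul {G H : Type*} [AddGroup G] [Fintype G] [AddGroup H] [Fintype H]
    [DecidableEq H] (f : G →+ H) (hf : Function.Surjective f) (s : H) :
    (univ.filter fun g => f g = s).card * Fintype.card H = Fintype.card G := by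
  classical
  have key : ∀ s₁ s₂ : H, (univ.filter fun g => f g = s₁).card
      = (univ.filter fun g => f g = s₂).card := by
    intro s₁ s₂
    obtain ⟨g₁, hg₁⟩ := hf s₁
    obtain ⟨g₂, hg₂⟩ := hf s₂
    apply Finset.card_nbij (fun g => g - g₁ + g₂)
    · intro a ha
      simp only [mem_coe, mem_filter, mem_univ, true_and] at ha ⊢
      simp [map_add, map_sub, ha, hg₁, hg₂]
    · intro a _ b _ hab
      simpa using hab
    · intro b hb
      simp only [coe_filter, Set.mem_setOf_eq, mem_univ, true_and, Set.mem_image] at hb ⊢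
      exact ⟨b - g₂ + g₁, by simp [map_sub, map_add, hb, hg₁, hg₂], by simp⟩
  have h1 : (Fintype.card G : ℕ) = ∑ t : H, (univ.filter fun g => f g = t).card := by
    rw [← Finset.card_univ]
    exact Finset.card_eq_sum_card_fiberwise (fun x _ => mem_univ _)
  rw [h1]
  rw [Finset.sum_congr rfl (fun t _ => key t s)]
  simp [Finset.sum_const, mul_comm, Finset.card_univ]

lemma card_comp_equiv (e : α ≃ β) (P : β → Prop) [DecidablePred P] :
    (univ.filter fun a => P (e a)).card = (univ.filter P).card := by
  apply Finset.card_nbij e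
  · intro a ha; simp only [mem_coe, mem_filter, mem_univ, true_and] at ha ⊢; exact ha
  · intro a _ b _ hab; exact e.injective hab
  · intro b hb
    simp only [coe_filter, Set.mem_setOf_eq, mem_univ, true_and, Set.mem_image] at hb ⊢
    exact ⟨e.symm b, by simpa using hb, by simp⟩

lemma card_filter_fst (P : α → Prop) [DecidablePred P] :
    (univ.filter fun z : α × β => P z.1).card = (univ.filter P).card * Fintype.card β := by
  classical
  have : (univ.filter fun z : α × β => P z.1) = (univ.filter P) ×ˢ univ := by
    ext z; simp
  rw [this, Finset.card_product, Finset.card_univ]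

lemma sum_card_fiber [DecidableEq β] (f : α → β) (P : α → Prop) [DecidablePred P]
    (Q : β → Prop) [DecidablePred Q] :
    ∑ w ∈ univ.filter Q, (univ.filter fun a => f a = w ∧ P a).card
      = (univ.filter fun a => Q (f a) ∧ P a).card := by
  classical
  rw [Finset.card_eq_sum_card_fiberwise (f := f) (t := univ.filter Q)
    (fun x hx => by simp only [mem_coe, mem_filter, mem_univ, true_and] at hx ⊢; exact hx.1)]
  apply Finset.sum_congr rfl
  intro w hw
  simp only [mem_filter, mem_univ, true_and] at hw
  congr 1
  ext a
  simp only [mem_filter, mem_univ, true_and]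
  constructor
  · rintro ⟨hfa, hP⟩; exact ⟨⟨by rw [hfa]; exact hw, hP⟩, hfa⟩
  · rintro ⟨⟨_, hP⟩, hfa⟩; exact ⟨hfa, hP⟩

lemma card_prod_split [DecidableEq α] (P : α → Prop) [DecidablePred P] (R : α → β → Prop)
    [∀ a, DecidablePred (R a)] :
    (univ.filter fun z : α × β => P z.1 ∧ R z.1 z.2).card
      = ∑ i ∈ univ.filter P, (univ.filter fun j => R i j).card := by
  classical
  have : (univ.filter fun z : α × β => P z.1 ∧ R z.1 z.2)
      = (univ.filter P).biUnion (fun i => {i} ×ˢ univ.filter (R i)) := by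
    ext z
    simp only [mem_filter, mem_univ, true_and, mem_biUnion, mem_product, mem_singleton]
    constructor
    · rintro ⟨h1, h2⟩; exact ⟨z.1, h1, rfl, h2⟩
    · rintro ⟨i, hi, h1, h2⟩; exact ⟨h1 ▸ hi, h1 ▸ h2⟩
  rw [this, Finset.card_biUnion]
  · apply Finset.sum_congr rfl
    intro i _
    rw [Finset.singleton_product, Finset.card_map]
  · intro i _ j _ hij
    simp only [Finset.disjoint_left]
    rintro z hz hz'
    simp only [mem_product, mem_singleton] at hz hz'
    exact hij (hz.1.symm.trans hz'.1)

end Counting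

open Finset

section Dot

variable {F : Type*} [Field F] [Fintype F] [DecidableEq F] {m : ℕ}

/-- the linear functional given by dot product with a coefficient vector -/
def dotHom (α : Fin m → F) : (Fin m → F) →+ F where
  toFun x := ∑ i, α i * x i
  map_zero' := by simp
  map_add' x y := by
    simp [mul_add, Finset.sum_add_distrib]

lemma dotHom_apply (α x : Fin m → F) : dotHom α x = ∑ i, α i * x i := rfl

lemma dotHom_smul (α x : Fin m → F) (c : F) : dotHom (c • α) x = c * dotHom α x := by
  simp [dotHom_apply, Finset.mul_sum, mul_assoc]

lemma dotHom_smul_right (α x : Fin m → F) (c : F) : dotHom α (c • x) = c * dotHom α x := by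
  simp [dotHom_apply, Finset.mul_sum]; apply Finset.sum_congr rfl; intro i _; ring

lemma dotHom_single (α : Fin m → F) (j : Fin m) :
    dotHom α (fun i => if i = j then 1 else 0) = α j := by
  rw [dotHom_apply, Finset.sum_eq_single j] <;> simp +contextual

lemma dotHom_zero_left (x : Fin m → F) : dotHom (0 : Fin m → F) x = 0 := by
  simp [dotHom_apply]

lemma dotHom_comm (α x : Fin m → F) : dotHom α x = dotHom x α := by
  simp [dotHom_apply, mul_comm]

lemma dot_surj {α : Fin m → F} (hα : α ≠ 0) : Function.Surjective (dotHom α) := by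
  intro s
  obtain ⟨i, hi⟩ : ∃ i, α i ≠ 0 := by
    by_contra hc
    push_neg at hc
    exact hα (funext hc)
  refine ⟨fun j => if j = i then (α i)⁻¹ * s else 0, ?_⟩
  rw [dotHom_apply, Finset.sum_eq_single i]
  · rw [if_pos rfl, ← mul_assoc, mul_inv_cancel₀ hi, one_mul]
  · intro j _ hj; simp [hj]
  · simp

/-- the pair functional -/
def pairHom (α β : Fin m → F) : (Fin m → F) →+ F × F :=
  (dotHom α).prod (dotHom β)

lemma pair_surj {α β : Fin m → F} (hα : α ≠ 0) (hind : ∀ c : F, β ≠ c • α) :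
    Function.Surjective (pairHom α β) := by
  obtain ⟨w₁, hw₁⟩ := dot_surj hα 1
  -- β does not vanish identically on the kernel of α
  have hker : ∃ w₂, dotHom α w₂ = 0 ∧ dotHom β w₂ ≠ 0 := by
    by_contra hc
    push_neg at hc
    apply hind (dotHom β w₁)
    funext j
    have h1 : dotHom α ((fun i => if i = j then 1 else 0) - (α j) • w₁) = 0 := by
      simp [map_sub, dotHom_single, dotHom_smul_right, hw₁]
    have h2 := hc _ h1
    rw [map_sub, dotHom_single, dotHom_smul_right, sub_eq_zero] at h2
    simp only [Pi.smul_apply, smul_eq_mul]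
    rw [h2]; ring
  obtain ⟨w₂, hw₂0, hw₂⟩ := hker
  rintro ⟨s, t⟩
  refine ⟨s • w₁ + (t - s * dotHom β w₁) • ((dotHom β w₂)⁻¹ • w₂), ?_⟩
  have hβw : dotHom β ((dotHom β w₂)⁻¹ • w₂) = 1 := by
    rw [dotHom_smul_right, inv_mul_cancel₀ hw₂]
  have hαw : dotHom α ((dotHom β w₂)⁻¹ • w₂) = 0 := by
    rw [dotHom_smul_right, hw₂0, mul_zero]
  simp only [pairHom, AddMonoidHom.prod_apply, Prod.mk.injEq]
  constructor
  · rw [map_add, dotHom_smul_right, dotHom_smul_right, hw₁, hαw]; ring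
  · rw [map_add, dotHom_smul_right, dotHom_smul_right, hβw]; ring

/-- normalized vectors: first nonzero coordinate is 1 -/
def Nrm (α : Fin m → F) : Prop := ∃ i, α i = 1 ∧ ∀ j, j < i → α j = 0

instance : DecidablePred (Nrm (F := F) (m := m)) := fun α => by
  unfold Nrm; infer_instance

lemma Nrm.ne_zero {α : Fin m → F} (h : Nrm α) : α ≠ 0 := by
  obtain ⟨i, hi, -⟩ := h
  intro hc
  rw [hc] at hi
  simp at hi

lemma nrm_smul_eq {α α' : Fin m → F} (hna : Nrm α) (hna' : Nrm α') {c : F}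
    (h : α' = c • α) : c = 1 := by
  have hc : c ≠ 0 := by
    intro hc0
    apply Nrm.ne_zero hna'
    rw [h, hc0, zero_smul]
  obtain ⟨i, hi1, hi0⟩ := hna
  obtain ⟨i', hi'1, hi'0⟩ := hna'
  have hii' : i = i' := by
    rcases lt_trichotomy i i' with hlt | heq | hgt
    · exfalso
      have := hi'0 i hlt
      rw [h] at this
      simp only [Pi.smul_apply, smul_eq_mul, hi1, mul_one] at this
      exact hc this
    · exact heq
    · exfalso
      have h0 := hi0 i' hgt
      have : α' i' = c * α i' := by rw [h]; simp
      rw [h0, mul_zero] at this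
      rw [this] at hi'1
      exact one_ne_zero hi'1.symm
  subst hii'
  have : α' i = c * α i := by rw [h]; simp
  rw [hi1, hi'1, mul_one] at this
  exact this.symm

/-- each nonzero vector is uniquely a unit multiple of a normalized vector -/
lemma exists_nrm {α : Fin m → F} (hα : α ≠ 0) :
    ∃ c : F, c ≠ 0 ∧ Nrm (c⁻¹ • α) := by
  have hne : (univ.filter fun i => α i ≠ 0).Nonempty := by
    by_contra hc
    rw [Finset.not_nonempty_iff_eq_empty, Finset.filter_eq_empty_iff] at hc
    apply hα; funext i
    have := hc (mem_univ i)
    simpa using this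
  obtain ⟨i, hi, hmin⟩ := Finset.exists_min_image _ id hne
  simp only [mem_filter, mem_univ, true_and] at hi
  refine ⟨α i, hi, i, ?_, ?_⟩
  · simp [inv_mul_cancel₀ hi]
  · intro j hj
    by_contra hc
    have : α j ≠ 0 := by
      intro h0; apply hc; simp [h0]
    have := hmin j (by simp [this])
    simp only [id] at this
    omega

/-- counting scale-closed sets by normalized representatives -/
lemma card_scale (P : (Fin m → F) → Prop) [DecidablePred P]
    (hP : ∀ (c : F), c ≠ 0 → ∀ α, P α → P (c • α)) :
    (univ.filter fun α => Nrm α ∧ P α).card * (Fintype.card F - 1)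
      = (univ.filter fun α : Fin m → F => α ≠ 0 ∧ P α).card := by
  classical
  have hcard : (Fintype.card F - 1) = (univ.filter fun c : F => c ≠ 0).card := by
    rw [Finset.filter_ne']
    rw [Finset.card_erase_of_mem (mem_univ _), Finset.card_univ]
  rw [hcard, ← Finset.card_product]
  apply Finset.card_nbij (fun z => z.2 • z.1)
  · rintro ⟨a, c⟩ ha
    simp only [mem_coe, mem_product, mem_filter, mem_univ, true_and] at ha ⊢
    obtain ⟨⟨hnrm, hPa⟩, hc⟩ := ha
    refine ⟨fun h0 => ?_, hP c hc a hPa⟩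
    apply hnrm.ne_zero
    funext j
    have := congrFun h0 j
    simp only [Pi.smul_apply, smul_eq_mul, Pi.zero_apply] at this ⊢
    rcases mul_eq_zero.mp this with h | h
    · exact absurd h hc
    · exact h
  · rintro ⟨a, c⟩ ha ⟨a', c'⟩ ha' heq
    simp only [coe_filter, Set.mem_setOf_eq, mem_coe, mem_product, mem_filter,
      mem_univ, true_and] at ha ha'
    obtain ⟨⟨hnrm, _⟩, hc⟩ := ha
    obtain ⟨⟨hnrm', _⟩, hc'⟩ := ha'
    simp only at heq
    have ha'eq : a' = (c'⁻¹ * c) • a := by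
      rw [mul_smul, heq, ← mul_smul, inv_mul_cancel₀ hc', one_smul]
    have h1 := nrm_smul_eq hnrm hnrm' ha'eq
    have hcc' : c = c' := by
      have h2 : c' * (c'⁻¹ * c) = c' * 1 := congrArg _ h1
      rw [← mul_assoc, mul_inv_cancel₀ hc', one_mul, mul_one] at h2
      exact h2
    subst hcc'
    have : a' = a := by rw [ha'eq, h1, one_smul]
    simp [this]
  · rintro b hb
    simp only [coe_filter, Set.mem_setOf_eq, mem_univ, true_and, Set.mem_image] at hb ⊢
    obtain ⟨hb0, hPb⟩ := hb
    obtain ⟨c, hc, hnrm⟩ := exists_nrm hb0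
    refine ⟨(c⁻¹ • b, c), ?_, ?_⟩
    · simp only [coe_product, Set.mem_prod, coe_filter, Set.mem_setOf_eq, mem_coe,
        mem_filter, mem_univ, true_and, Set.mem_setOf_eq]
      exact ⟨⟨hnrm, hP c⁻¹ (inv_ne_zero hc) b hPb⟩, hc⟩
    · simp [← mul_smul, mul_inv_cancel₀ hc]

end Dot

open Finset

section Join

variable {F : Type*} [Field F] {h : ℕ}

/-- join two vectors into one of double length -/
def jn (α β : Fin h → F) : Fin (h + h) → F :=
  fun i => Sum.elim α β (finSumFinEquiv.symm i)

lemma jn_apply_inl (α β : Fin h → F) (a : Fin h) :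
    jn α β (finSumFinEquiv (Sum.inl a)) = α a := by
  unfold jn; rw [Equiv.symm_apply_apply]; rfl

lemma jn_apply_inr (α β : Fin h → F) (a : Fin h) :
    jn α β (finSumFinEquiv (Sum.inr a)) = β a := by
  unfold jn; rw [Equiv.symm_apply_apply]; rfl

lemma jn_def (w : Fin (h + h) → F) :
    jn (fun i => w (finSumFinEquiv (Sum.inl i))) (fun i => w (finSumFinEquiv (Sum.inr i))) = w := by
  funext i
  unfold jn
  rcases hsi : finSumFinEquiv.symm i with a | a <;>
  · simp only [Sum.elim_inl, Sum.elim_inr]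
    congr 1
    rw [← hsi, Equiv.apply_symm_apply]

lemma jn_inj {α β α' β' : Fin h → F} (hj : jn α β = jn α' β') : α = α' ∧ β = β' := by
  constructor
  · funext a
    have := congrFun hj (finSumFinEquiv (Sum.inl a))
    rwa [jn_apply_inl, jn_apply_inl] at this
  · funext a
    have := congrFun hj (finSumFinEquiv (Sum.inr a))
    rwa [jn_apply_inr, jn_apply_inr] at this

lemma jn_smul (α β : Fin h → F) (c : F) : jn (c • α) (c • β) = c • jn α β := by
  funext i
  simp only [jn, Pi.smul_apply, smul_eq_mul]
  rcases h' : finSumFinEquiv.symm i with a | a <;> simp [h']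

lemma jn_eq_zero_iff {α β : Fin h → F} : jn α β = 0 ↔ α = 0 ∧ β = 0 := by
  constructor
  · intro hj
    have : jn α β = jn 0 0 := by
      rw [hj]; funext i; unfold jn; rcases finSumFinEquiv.symm i with a | a <;> simp
    exact jn_inj this
  · rintro ⟨rfl, rfl⟩
    funext i; unfold jn; rcases finSumFinEquiv.symm i with a | a <;> simp

/-- the equivalence between pairs and joined vectors -/
noncomputable def jnEquiv : ((Fin h → F) × (Fin h → F)) ≃ (Fin (h + h) → F) := by
  refine Equiv.ofBijective (fun z => jn z.1 z.2) ⟨?_, ?_⟩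
  · rintro ⟨a, b⟩ ⟨a', b'⟩ hab
    obtain ⟨h1, h2⟩ := jn_inj hab
    exact Prod.ext h1 h2
  · intro w
    exact ⟨(fun i => w (finSumFinEquiv (Sum.inl i)), fun i => w (finSumFinEquiv (Sum.inr i))),
      jn_def w⟩

lemma jnEquiv_apply (z : (Fin h → F) × (Fin h → F)) : jnEquiv z = jn z.1 z.2 := rfl

end Join

section JoinDot

variable {F : Type*} [Field F] [Fintype F] [DecidableEq F] {h : ℕ}

lemma dotHom_jn (α β x y : Fin h → F) : dotHom (jn α β) (jn x y) = dotHom α x + dotHom β y := by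
  rw [dotHom_apply, ← Equiv.sum_comp finSumFinEquiv (fun i => jn α β i * jn x y i),
    Fintype.sum_sum_type]
  simp only [jn_apply_inl, jn_apply_inr, dotHom_apply]

end JoinDot


def IsFreqSquare {n m : ℕ} (lam : ℕ) (F : Fin n → Fin n → Fin m) : Prop :=
  (∀ i : Fin n, ∀ s : Fin m, (Finset.univ.filter fun j => F i j = s).card = lam) ∧
  (∀ j : Fin n, ∀ s : Fin m, (Finset.univ.filter fun i => F i j = s).card = lam)

def AreOrth {n m : ℕ} (lam : ℕ) (F G : Fin n → Fin n → Fin m) : Prop :=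
  ∀ a b : Fin m,
    (Finset.univ.filter fun p : Fin n × Fin n => F p.1 p.2 = a ∧ G p.1 p.2 = b).card = lam ^ 2

def IsMaxFamily {n m k : ℕ} (lam : ℕ) (F : Fin k → Fin n → Fin n → Fin m) : Prop :=
  ¬ ∃ G : Fin n → Fin n → Fin m, IsFreqSquare lam G ∧ ∀ t, AreOrth lam (F t) G

/-- If `q = p^u` is a prime power, `p^v` is the highest power of `p` dividing `n`,
and `0 ≤ v - u*h < u/2` for some `h ≥ 1`, then there is a maximal set of
`(q^h - 1)^2 / (q - 1)` MOFS of type `(n; n/q)`. -/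
theorem stmt4 (p u v h n q : ℕ) (hp : p.Prime) (hq : q = p ^ u) (hu : 0 < u)
    (hh : 1 ≤ h) (hv : p ^ v ∣ n) (hv' : ¬ p ^ (v + 1) ∣ n)
    (h1 : u * h ≤ v) (h2 : 2 * (v - u * h) < u) :
    ∃ (k : ℕ) (F : Fin k → Fin n → Fin n → Fin q),
      k * (q - 1) = (q ^ h - 1) ^ 2 ∧
      (∀ t, IsFreqSquare (n / q) (F t)) ∧
      (∀ s t, s ≠ t → AreOrth (n / q) (F s) (F t)) ∧
      IsMaxFamily (n / q) F := by
  classical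
  haveI fp : Fact p.Prime := ⟨hp⟩
  set K := GaloisField p u with hKdef
  haveI : Fintype K := Fintype.ofFinite K
  haveI : DecidableEq K := Classical.decEq K
  have hK : Fintype.card K = q := by
    rw [hq, ← GaloisField.card p u hu.ne', Nat.card_eq_fintype_card]
  have hq2 : 2 ≤ q := by
    rw [hq]
    calc 2 ≤ p := hp.two_le
    _ ≤ p ^ u := Nat.le_self_pow hu.ne' p
  have hq0 : 0 < q := by omega
  have hn0 : 0 < n := by
    rcases Nat.eq_zero_or_pos n with h0 | h0
    · exact absurd (h0 ▸ dvd_zero _) hv'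
    · exact h0
  have hqh_dvd : q ^ h ∣ n := by
    rw [hq, ← pow_mul]
    exact dvd_trans (pow_dvd_pow p h1) hv
  set d := n / q ^ h with hddef
  have hnd : n = q ^ h * d := (Nat.mul_div_cancel' hqh_dvd).symm
  have hd0 : 0 < d := by
    rcases Nat.eq_zero_or_pos d with h0 | h0
    · rw [h0, mul_zero] at hnd; omega
    · exact h0
  have hq_dvd : q ∣ n := dvd_trans (dvd_pow_self q (by omega : h ≠ 0)) hqh_dvd
  have hlam : n / q = q ^ (h - 1) * d := by
    have heq : n = (q ^ (h - 1) * d) * q := by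
      rw [hnd]
      have : q ^ h = q ^ (h - 1) * q := by
        rw [← pow_succ]
        congr 1
        omega
      rw [this]
      ring
    rw [heq, Nat.mul_div_cancel _ hq0]
  have hcardV : Fintype.card (Fin h → K) = q ^ h := by
    rw [Fintype.card_fun, hK, Fintype.card_fin]
  have hcardW : Fintype.card (Fin (h + h) → K) = q ^ (h + h) := by
    rw [Fintype.card_fun, hK, Fintype.card_fin]
  obtain ⟨E⟩ : Nonempty (Fin n ≃ (Fin h → K) × Fin d) := by
    refine ⟨(finCongr hnd).trans (finProdFinEquiv.symm.trans
      (Equiv.prodCongr (Fintype.equivFinOfCardEq hcardV).symm (Equiv.refl (Fin d))))⟩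
  obtain ⟨σ⟩ : Nonempty (K ≃ Fin q) := ⟨Fintype.equivFinOfCardEq hK⟩
  -- row/column counting helper
  have rowcount : ∀ (β : Fin h → K), β ≠ 0 → ∀ c : K,
      (Finset.univ.filter fun j : Fin n => dotHom β (E j).1 = c).card = n / q := by
    intro β hβ c
    rw [card_comp_equiv E (fun z : (Fin h → K) × Fin d => dotHom β z.1 = c),
      card_filter_fst (fun y : Fin h → K => dotHom β y = c), Fintype.card_fin]
    have hf := fiber_card_mul (dotHom β) (dot_surj hβ) c
    rw [hcardV, hK] at hf
    exact (Nat.div_eq_of_eq_mul_left hq0 (by rw [hnd, ← hf]; ring)).symm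
  -- pair counting helper
  have paircount : ∀ (ω₁ ω₂ : Fin (h + h) → K), ω₁ ≠ 0 → (∀ c : K, ω₂ ≠ c • ω₁) →
      ∀ c₁ c₂ : K,
      (Finset.univ.filter fun pr : Fin n × Fin n =>
        dotHom ω₁ (jn (E pr.1).1 (E pr.2).1) = c₁ ∧
        dotHom ω₂ (jn (E pr.1).1 (E pr.2).1) = c₂).card = (n / q) ^ 2 := by
    intro ω₁ ω₂ hω₁ hind c₁ c₂
    let e2 : (Fin n × Fin n) ≃ ((Fin h → K) × (Fin h → K)) × (Fin d × Fin d) :=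
      { toFun := fun pr => (((E pr.1).1, (E pr.2).1), ((E pr.1).2, (E pr.2).2)),
        invFun := fun z => (E.symm (z.1.1, z.2.1), E.symm (z.1.2, z.2.2)),
        left_inv := by intro pr; simp,
        right_inv := by intro z; simp }
    have step1 : (Finset.univ.filter fun pr : Fin n × Fin n =>
        dotHom ω₁ (jn (E pr.1).1 (E pr.2).1) = c₁ ∧
        dotHom ω₂ (jn (E pr.1).1 (E pr.2).1) = c₂).card
        = (Finset.univ.filter fun z : ((Fin h → K) × (Fin h → K)) × (Fin d × Fin d) =>
            dotHom ω₁ (jn z.1.1 z.1.2) = c₁ ∧ dotHom ω₂ (jn z.1.1 z.1.2) = c₂).card := by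
      rw [← card_comp_equiv e2 (fun z : ((Fin h → K) × (Fin h → K)) × (Fin d × Fin d) =>
        dotHom ω₁ (jn z.1.1 z.1.2) = c₁ ∧ dotHom ω₂ (jn z.1.1 z.1.2) = c₂)]
      rfl
    rw [step1, card_filter_fst (fun z1 : (Fin h → K) × (Fin h → K) =>
        dotHom ω₁ (jn z1.1 z1.2) = c₁ ∧ dotHom ω₂ (jn z1.1 z1.2) = c₂)]
    simp only [← jnEquiv_apply]
    erw [card_comp_equiv (jnEquiv : ((Fin h → K) × (Fin h → K)) ≃ (Fin (h + h) → K))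
        (fun w => dotHom ω₁ w = c₁ ∧ dotHom ω₂ w = c₂)]
    have hf := fiber_card_mul (pairHom ω₁ ω₂) (pair_surj hω₁ hind) (c₁, c₂)
    have hfilter : (Finset.univ.filter fun g : Fin (h + h) → K => pairHom ω₁ ω₂ g = (c₁, c₂))
        = Finset.univ.filter fun w : Fin (h + h) → K =>
            dotHom ω₁ w = c₁ ∧ dotHom ω₂ w = c₂ := by
      apply Finset.filter_congr
      intro w _
      simp [pairHom, Prod.ext_iff]
    rw [hfilter, hcardW, Fintype.card_prod, hK] at hf
    rw [Fintype.card_prod, Fintype.card_fin]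
    have hnq : n / q * q = n := Nat.div_mul_cancel hq_dvd
    apply Nat.eq_of_mul_eq_mul_right (show 0 < q * q by positivity)
    calc (Finset.univ.filter fun w : Fin (h + h) → K =>
            dotHom ω₁ w = c₁ ∧ dotHom ω₂ w = c₂).card * (d * d) * (q * q)
        = (Finset.univ.filter fun w : Fin (h + h) → K =>
            dotHom ω₁ w = c₁ ∧ dotHom ω₂ w = c₂).card * (q * q) * (d * d) := by ring
      _ = q ^ (h + h) * (d * d) := by rw [hf]
      _ = (q ^ h * d) * (q ^ h * d) := by rw [pow_add]; ring
      _ = n * n := by rw [← hnd]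
      _ = (n / q * q) * (n / q * q) := by rw [hnq]
      _ = (n / q) ^ 2 * (q * q) := by ring
  -- the index set
  obtain ⟨eI⟩ : Nonempty (Fin (Fintype.card
      {ab : (Fin h → K) × (Fin h → K) // Nrm ab.1 ∧ ab.2 ≠ 0}) ≃
      {ab : (Fin h → K) × (Fin h → K) // Nrm ab.1 ∧ ab.2 ≠ 0}) :=
    ⟨(Fintype.equivFin _).symm⟩
  refine ⟨Fintype.card {ab : (Fin h → K) × (Fin h → K) // Nrm ab.1 ∧ ab.2 ≠ 0},
    fun t i j => σ (dotHom (eI t).1.1 (E i).1 + dotHom (eI t).1.2 (E j).1), ?_, ?_, ?_, ?_⟩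
  · -- cardinality
    have hAB : Fintype.card {ab : (Fin h → K) × (Fin h → K) // Nrm ab.1 ∧ ab.2 ≠ 0}
        = (Finset.univ.filter (Nrm : (Fin h → K) → Prop)).card *
          (Finset.univ.filter fun β : Fin h → K => β ≠ 0).card := by
      rw [Fintype.card_subtype]
      have hsplit : (Finset.univ.filter fun ab : (Fin h → K) × (Fin h → K) =>
            Nrm ab.1 ∧ ab.2 ≠ 0)
          = (Finset.univ.filter (Nrm : (Fin h → K) → Prop)) ×ˢ
            (Finset.univ.filter fun β : Fin h → K => β ≠ 0) := by
        ext ab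
        simp only [Finset.mem_filter, Finset.mem_univ, true_and, Finset.mem_product]
      rw [hsplit, Finset.card_product]
    have hB : (Finset.univ.filter fun β : Fin h → K => β ≠ 0).card = q ^ h - 1 := by
      rw [Finset.filter_ne' Finset.univ (0 : Fin h → K),
        Finset.card_erase_of_mem (Finset.mem_univ _), Finset.card_univ, hcardV]
    have hA := card_scale (F := K) (m := h) (fun _ => True) (fun c hc α _ => trivial)
    simp only [and_true] at hA
    rw [hK] at hA
    rw [hAB]
    calc (Finset.univ.filter (Nrm : (Fin h → K) → Prop)).card *
          (Finset.univ.filter fun β : Fin h → K => β ≠ 0).card * (q - 1)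
        = ((Finset.univ.filter (Nrm : (Fin h → K) → Prop)).card * (q - 1)) *
          (Finset.univ.filter fun β : Fin h → K => β ≠ 0).card := by ring
      _ = (q ^ h - 1) * (q ^ h - 1) := by rw [hA, hB]
      _ = (q ^ h - 1) ^ 2 := (sq _).symm
  · -- frequency squares
    intro t
    constructor
    · intro i s
      have hfil : (Finset.univ.filter fun j : Fin n =>
            σ (dotHom (eI t).1.1 (E i).1 + dotHom (eI t).1.2 (E j).1) = s)
          = Finset.univ.filter fun j : Fin n =>
              dotHom (eI t).1.2 (E j).1 = σ.symm s - dotHom (eI t).1.1 (E i).1 := by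
        apply Finset.filter_congr
        intro j _
        rw [Equiv.apply_eq_iff_eq_symm_apply]
        constructor
        · intro h'; linear_combination h'
        · intro h'; linear_combination h'
      rw [hfil, rowcount _ (eI t).2.2]
    · intro j s
      have hfil : (Finset.univ.filter fun i : Fin n =>
            σ (dotHom (eI t).1.1 (E i).1 + dotHom (eI t).1.2 (E j).1) = s)
          = Finset.univ.filter fun i : Fin n =>
              dotHom (eI t).1.1 (E i).1 = σ.symm s - dotHom (eI t).1.2 (E j).1 := by
        apply Finset.filter_congr
        intro i _
        rw [Equiv.apply_eq_iff_eq_symm_apply]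
        constructor
        · intro h'; linear_combination h'
        · intro h'; linear_combination h'
      rw [hfil, rowcount _ (Nrm.ne_zero (eI t).2.1)]
  · -- orthogonality
    intro s t hst a0 b0
    have hω₁ : jn (eI s).1.1 (eI s).1.2 ≠ 0 := by
      rw [Ne, jn_eq_zero_iff]
      rintro ⟨ha, -⟩
      exact Nrm.ne_zero (eI s).2.1 ha
    have hind : ∀ c : K, jn (eI t).1.1 (eI t).1.2 ≠ c • jn (eI s).1.1 (eI s).1.2 := by
      intro c hc
      rw [← jn_smul] at hc
      obtain ⟨ha, hb⟩ := jn_inj hc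
      have hc1 : c = 1 := nrm_smul_eq (eI s).2.1 (eI t).2.1 ha
      rw [hc1, one_smul] at ha hb
      exact hst (eI.injective (Subtype.ext (Prod.ext ha.symm hb.symm)))
    have hpc := paircount _ _ hω₁ hind (σ.symm a0) (σ.symm b0)
    rw [← hpc]
    congr 1
    apply Finset.filter_congr
    intro pr _
    rw [dotHom_jn, dotHom_jn, Equiv.apply_eq_iff_eq_symm_apply,
      Equiv.apply_eq_iff_eq_symm_apply]
  · -- maximality
    rintro ⟨G, hGfs, hGorth⟩
    set s0 : Fin q := σ 0 with hs0
    set N' : (Fin (h + h) → K) → ℕ := fun w =>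
      (Finset.univ.filter fun pr : Fin n × Fin n =>
        jn (E pr.1).1 (E pr.2).1 = w ∧ G pr.1 pr.2 = s0).card with hN'
    -- every hyperplane sum of block counts is (n/q)^2
    have hyper : ∀ ω : Fin (h + h) → K, ω ≠ 0 → ∀ c : K,
        ∑ w ∈ Finset.univ.filter (fun w : Fin (h + h) → K => dotHom ω w = c), N' w
          = (n / q) ^ 2 := by
      intro ω hω c
      simp only [hN']
      rw [sum_card_fiber (fun pr : Fin n × Fin n => jn (E pr.1).1 (E pr.2).1)
        (fun pr => G pr.1 pr.2 = s0) (fun w => dotHom ω w = c)]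
      obtain ⟨ωa, ωb, rfl⟩ : ∃ ωa ωb, jn ωa ωb = ω := ⟨_, _, jn_def ω⟩
      by_cases ha : ωa = 0
      · by_cases hb : ωb = 0
        · exact absurd (by rw [ha, hb]; exact jn_eq_zero_iff.mpr ⟨rfl, rfl⟩) hω
        · -- column case
          have hfil : (Finset.univ.filter fun pr : Fin n × Fin n =>
                dotHom (jn ωa ωb) (jn (E pr.1).1 (E pr.2).1) = c ∧ G pr.1 pr.2 = s0)
              = Finset.univ.filter fun pr : Fin n × Fin n =>
                  dotHom ωb (E pr.2).1 = c ∧ G pr.1 pr.2 = s0 := by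
            apply Finset.filter_congr
            intro pr _
            rw [dotHom_jn, ha, dotHom_zero_left, zero_add]
          rw [hfil]
          have hswap : (Finset.univ.filter fun pr : Fin n × Fin n =>
                dotHom ωb (E pr.2).1 = c ∧ G pr.1 pr.2 = s0).card
              = (Finset.univ.filter fun z : Fin n × Fin n =>
                  dotHom ωb (E z.1).1 = c ∧ G z.2 z.1 = s0).card := by
            rw [← card_comp_equiv (Equiv.prodComm (Fin n) (Fin n))
              (fun z : Fin n × Fin n => dotHom ωb (E z.1).1 = c ∧ G z.2 z.1 = s0)]
            rfl
          rw [hswap, card_prod_split (fun j : Fin n => dotHom ωb (E j).1 = c)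
            (fun j i => G i j = s0)]
          rw [Finset.sum_congr rfl (fun j _ => hGfs.2 j s0), Finset.sum_const,
            smul_eq_mul, rowcount ωb hb c, sq]
      · by_cases hb : ωb = 0
        · -- row case
          have hfil : (Finset.univ.filter fun pr : Fin n × Fin n =>
                dotHom (jn ωa ωb) (jn (E pr.1).1 (E pr.2).1) = c ∧ G pr.1 pr.2 = s0)
              = Finset.univ.filter fun pr : Fin n × Fin n =>
                  dotHom ωa (E pr.1).1 = c ∧ G pr.1 pr.2 = s0 := by
            apply Finset.filter_congr
            intro pr _
            rw [dotHom_jn, hb, dotHom_zero_left, add_zero]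
          rw [hfil, card_prod_split (fun i : Fin n => dotHom ωa (E i).1 = c)
            (fun i j => G i j = s0)]
          rw [Finset.sum_congr rfl (fun i _ => hGfs.1 i s0), Finset.sum_const,
            smul_eq_mul, rowcount ωa ha c, sq]
        · -- generic case: use orthogonality with a member of the family
          obtain ⟨c₀, hc₀, hnrm⟩ := exists_nrm ha
          have hb0 : c₀⁻¹ • ωb ≠ 0 := by
            intro h0
            rcases smul_eq_zero.mp h0 with h0' | h0'
            · exact inv_ne_zero hc₀ h0'
            · exact hb h0'
          have horth := hGorth (eI.symm ⟨(c₀⁻¹ • ωa, c₀⁻¹ • ωb), hnrm, hb0⟩)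
            (σ (c₀⁻¹ * c)) s0
          simp only [Equiv.apply_symm_apply] at horth
          rw [← horth]
          congr 1
          apply Finset.filter_congr
          intro pr _
          have key : (dotHom ωa (E pr.1).1 + dotHom ωb (E pr.2).1 = c)
              ↔ (dotHom (c₀⁻¹ • ωa) (E pr.1).1 + dotHom (c₀⁻¹ • ωb) (E pr.2).1
                  = c₀⁻¹ * c) := by
            rw [dotHom_smul, dotHom_smul, ← mul_add]
            constructor
            · intro h'; rw [h']
            · intro h'; exact mul_left_cancel₀ (inv_ne_zero hc₀) h'
          rw [dotHom_jn, key, ← Equiv.apply_eq_iff_eq σ]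
    -- total count
    have hone : (fun _ : Fin (h + h) => (1 : K)) ≠ 0 := by
      intro h0
      have h00 := congrFun h0 ⟨0, by omega⟩
      simp at h00
    have hS : ∑ w : Fin (h + h) → K, N' w = q * (n / q) ^ 2 := by
      rw [← Finset.sum_fiberwise_of_maps_to (t := (Finset.univ : Finset K))
        (g := fun w : Fin (h + h) → K => dotHom (fun _ => (1 : K)) w)
        (fun w _ => Finset.mem_univ _) N']
      rw [Finset.sum_congr rfl (fun c _ => hyper _ hone c), Finset.sum_const,
        Finset.card_univ, hK, smul_eq_mul]
    -- counting normalized functionals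
    have hpos : 0 < h + h := by omega
    have hKrel : (Finset.univ.filter (Nrm : (Fin (h + h) → K) → Prop)).card * (q - 1) + 1
        = q ^ (h + h) := by
      have hA2 := card_scale (F := K) (m := h + h) (fun _ => True) (fun c hc α _ => trivial)
      simp only [and_true] at hA2
      rw [hK] at hA2
      have hB2 : (Finset.univ.filter fun β : Fin (h + h) → K => β ≠ 0).card
          = q ^ (h + h) - 1 := by
        rw [Finset.filter_ne' Finset.univ (0 : Fin (h + h) → K),
          Finset.card_erase_of_mem (Finset.mem_univ _), Finset.card_univ, hcardW]
      rw [hA2, hB2]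
      have : 1 ≤ q ^ (h + h) := Nat.one_le_pow _ _ hq0
      omega
    -- counting normalized functionals vanishing on a fixed nonzero vector
    have hMrel : ∀ w : Fin (h + h) → K, w ≠ 0 →
        (((Finset.univ.filter (Nrm : (Fin (h + h) → K) → Prop)).filter
            (fun ψ => dotHom ψ w = 0)).card * (q - 1) + 1) * q = q ^ (h + h) := by
      intro w hw
      have hscale := card_scale (F := K) (m := h + h) (fun ψ => dotHom ψ w = 0)
        (fun c hc ψ hψ => by
          show dotHom (c • ψ) w = 0
          have hψ' : dotHom ψ w = 0 := hψ
          rw [dotHom_smul, hψ', mul_zero])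
      rw [hK] at hscale
      have hff : (Finset.univ.filter (Nrm : (Fin (h + h) → K) → Prop)).filter
            (fun ψ => dotHom ψ w = 0)
          = Finset.univ.filter fun ψ : Fin (h + h) → K => Nrm ψ ∧ dotHom ψ w = 0 := by
        rw [Finset.filter_filter]
      have hcomm : (Finset.univ.filter fun ψ : Fin (h + h) → K => dotHom ψ w = 0)
          = Finset.univ.filter fun ψ : Fin (h + h) → K => dotHom w ψ = 0 := by
        apply Finset.filter_congr
        intro ψ _
        rw [dotHom_comm]
      have hfib := fiber_card_mul (dotHom w) (dot_surj hw) 0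
      rw [hcardW, hK] at hfib
      have hzero : (0 : Fin (h + h) → K) ∈ Finset.univ.filter
          fun ψ : Fin (h + h) → K => dotHom ψ w = 0 := by
        simp only [Finset.mem_filter, Finset.mem_univ, true_and]
        exact dotHom_zero_left w
      have herase : (Finset.univ.filter fun ψ : Fin (h + h) → K => ψ ≠ 0 ∧ dotHom ψ w = 0)
          = (Finset.univ.filter fun ψ : Fin (h + h) → K => dotHom ψ w = 0).erase 0 := by
        ext ψ
        simp only [Finset.mem_filter, Finset.mem_univ, true_and, Finset.mem_erase]
      have hcpos : 0 < (Finset.univ.filter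
          fun ψ : Fin (h + h) → K => dotHom ψ w = 0).card :=
        Finset.card_pos.mpr ⟨0, hzero⟩
      have hcard_erase := Finset.card_erase_of_mem hzero
      rw [hff, hscale, herase, hcard_erase]
      rw [Nat.sub_add_cancel hcpos]
      rw [← hcomm] at hfib
      exact hfib
    -- double counting
    set Bset := Finset.univ.filter (Nrm : (Fin (h + h) → K) → Prop) with hBset
    have hswap : ∑ ψ ∈ Bset,
        ∑ w ∈ Finset.univ.filter (fun w : Fin (h + h) → K => dotHom ψ w = 0), N' w
        = ∑ w : Fin (h + h) → K, N' w *
            (Bset.filter (fun ψ => dotHom ψ w = 0)).card := by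
      rw [Finset.sum_congr rfl (fun ψ _ => Finset.sum_filter
        (fun w : Fin (h + h) → K => dotHom ψ w = 0) N')]
      rw [Finset.sum_comm]
      apply Finset.sum_congr rfl
      intro w _
      rw [← Finset.sum_filter (fun ψ : Fin (h + h) → K => dotHom ψ w = 0)
        (fun _ => N' w), Finset.sum_const, smul_eq_mul, mul_comm]
    have hLHS : ∑ ψ ∈ Bset,
        ∑ w ∈ Finset.univ.filter (fun w : Fin (h + h) → K => dotHom ψ w = 0), N' w
        = Bset.card * (n / q) ^ 2 := by
      rw [Finset.sum_congr rfl (fun ψ hψ => hyper ψ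
        (Nrm.ne_zero (Finset.mem_filter.mp (hBset ▸ hψ)).2) 0)]
      rw [Finset.sum_const, smul_eq_mul]
    have hcnt0 : Bset.filter (fun ψ => dotHom ψ (0 : Fin (h + h) → K) = 0) = Bset :=
      Finset.filter_true_of_mem (fun ψ _ => map_zero _)
    have hMeq : ∀ w : Fin (h + h) → K, w ≠ 0 →
        (Bset.filter (fun ψ => dotHom ψ w = 0)).card
          = (Bset.filter (fun ψ => dotHom ψ (fun _ => (1 : K)) = 0)).card := by
      intro w hw
      have e1 := hMrel w hw
      have e2 := hMrel _ hone
      have e3 := Nat.eq_of_mul_eq_mul_right hq0 (e1.trans e2.symm)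
      have e4 : (Bset.filter (fun ψ => dotHom ψ w = 0)).card * (q - 1)
          = (Bset.filter (fun ψ => dotHom ψ (fun _ => (1 : K)) = 0)).card * (q - 1) := by
        omega
      exact Nat.eq_of_mul_eq_mul_right (by omega) e4
    have hDC : Bset.card * (n / q) ^ 2
        = N' 0 * Bset.card + (∑ w ∈ Finset.univ.erase (0 : Fin (h + h) → K), N' w) *
            (Bset.filter (fun ψ => dotHom ψ (fun _ => (1 : K)) = 0)).card := by
      rw [← hLHS, hswap,
        ← Finset.add_sum_erase Finset.univ _ (Finset.mem_univ (0 : Fin (h + h) → K)),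
        hcnt0]
      congr 1
      rw [Finset.sum_mul]
      apply Finset.sum_congr rfl
      intro w hw
      rw [hMeq w (Finset.mem_erase.mp hw).1]
    have hT : N' 0 + ∑ w ∈ Finset.univ.erase (0 : Fin (h + h) → K), N' w
        = q * (n / q) ^ 2 := by
      rw [Finset.add_sum_erase Finset.univ N' (Finset.mem_univ (0 : Fin (h + h) → K))]
      exact hS
    -- integer algebra
    have hq1 : (1 : ℕ) ≤ q := by omega
    have hMrel1 := hMrel _ hone
    have hKz : ((Bset.card : ℤ)) * ((q : ℤ) - 1) + 1 = (q : ℤ) ^ (h + h) := by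
      have hcast := congrArg (Nat.cast : ℕ → ℤ) hKrel
      push_cast [Nat.cast_sub hq1] at hcast
      exact hcast
    have hMz0 : (((Bset.filter (fun ψ => dotHom ψ (fun _ => (1 : K)) = 0)).card : ℤ)
        * ((q : ℤ) - 1) + 1) * (q : ℤ) = (q : ℤ) ^ (h + h) := by
      have hcast := congrArg (Nat.cast : ℕ → ℤ) hMrel1
      push_cast [Nat.cast_sub hq1] at hcast
      exact hcast
    have hpowz : ((q : ℤ)) ^ (h + h) = (q : ℤ) ^ (h + h - 1) * (q : ℤ) := by
      rw [← pow_succ]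
      congr 1
      omega
    have hMz : ((Bset.filter (fun ψ => dotHom ψ (fun _ => (1 : K)) = 0)).card : ℤ)
        * ((q : ℤ) - 1) + 1 = (q : ℤ) ^ (h + h - 1) := by
      have hq0z : (q : ℤ) ≠ 0 := by exact_mod_cast Nat.pos_iff_ne_zero.mp hq0
      apply mul_right_cancel₀ hq0z
      rw [hMz0, hpowz]
    have hDCz : ((Bset.card : ℤ)) * ((n / q : ℕ) : ℤ) ^ 2
        = (N' 0 : ℤ) * (Bset.card : ℤ)
          + ((∑ w ∈ Finset.univ.erase (0 : Fin (h + h) → K), N' w : ℕ) : ℤ) *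
            ((Bset.filter (fun ψ => dotHom ψ (fun _ => (1 : K)) = 0)).card : ℤ) := by
      exact_mod_cast congrArg (Nat.cast : ℕ → ℤ) hDC
    have hTz : (N' 0 : ℤ) + ((∑ w ∈ Finset.univ.erase (0 : Fin (h + h) → K), N' w : ℕ) : ℤ)
        = (q : ℤ) * ((n / q : ℕ) : ℤ) ^ 2 := by
      exact_mod_cast congrArg (Nat.cast : ℕ → ℤ) hT
    have key : ((q : ℤ) * (q : ℤ) ^ (h + h - 1) - 1) * (((n / q : ℕ) : ℤ) ^ 2 - (N' 0 : ℤ))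
        = ((q : ℤ) * ((n / q : ℕ) : ℤ) ^ 2 - (N' 0 : ℤ)) * ((q : ℤ) ^ (h + h - 1) - 1) := by
      have hKz' : (Bset.card : ℤ) * ((q : ℤ) - 1)
          = (q : ℤ) * (q : ℤ) ^ (h + h - 1) - 1 := by
        rw [mul_comm ((q : ℤ)) ((q : ℤ) ^ (h + h - 1)), ← hpowz]
        linarith [hKz]
      have hMz' : ((Bset.filter (fun ψ => dotHom ψ (fun _ => (1 : K)) = 0)).card : ℤ)
          * ((q : ℤ) - 1) = (q : ℤ) ^ (h + h - 1) - 1 := by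
        linarith [hMz]
      have hTz' : ((∑ w ∈ Finset.univ.erase (0 : Fin (h + h) → K), N' w : ℕ) : ℤ)
          = (q : ℤ) * ((n / q : ℕ) : ℤ) ^ 2 - (N' 0 : ℤ) := by
        linarith [hTz]
      calc ((q : ℤ) * (q : ℤ) ^ (h + h - 1) - 1) * (((n / q : ℕ) : ℤ) ^ 2 - (N' 0 : ℤ))
          = (Bset.card : ℤ) * ((q : ℤ) - 1) * (((n / q : ℕ) : ℤ) ^ 2 - (N' 0 : ℤ)) := by
            rw [hKz']
        _ = ((Bset.card : ℤ) * ((n / q : ℕ) : ℤ) ^ 2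
              - (N' 0 : ℤ) * (Bset.card : ℤ)) * ((q : ℤ) - 1) := by ring
        _ = (((∑ w ∈ Finset.univ.erase (0 : Fin (h + h) → K), N' w : ℕ) : ℤ) *
              ((Bset.filter (fun ψ => dotHom ψ (fun _ => (1 : K)) = 0)).card : ℤ))
              * ((q : ℤ) - 1) := by
            rw [show (Bset.card : ℤ) * ((n / q : ℕ) : ℤ) ^ 2
                - (N' 0 : ℤ) * (Bset.card : ℤ)
              = ((∑ w ∈ Finset.univ.erase (0 : Fin (h + h) → K), N' w : ℕ) : ℤ) *
                ((Bset.filter (fun ψ => dotHom ψ (fun _ => (1 : K)) = 0)).card : ℤ)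
              from by linarith [hDCz]]
        _ = ((∑ w ∈ Finset.univ.erase (0 : Fin (h + h) → K), N' w : ℕ) : ℤ) *
              (((Bset.filter (fun ψ => dotHom ψ (fun _ => (1 : K)) = 0)).card : ℤ)
                * ((q : ℤ) - 1)) := by ring
        _ = ((∑ w ∈ Finset.univ.erase (0 : Fin (h + h) → K), N' w : ℕ) : ℤ) *
              ((q : ℤ) ^ (h + h - 1) - 1) := by rw [hMz']
        _ = ((q : ℤ) * ((n / q : ℕ) : ℤ) ^ 2 - (N' 0 : ℤ)) *
              ((q : ℤ) ^ (h + h - 1) - 1) := by rw [hTz']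
    have hfinalz : (((n / q : ℕ) : ℤ)) ^ 2 * ((q : ℤ) - 1)
        = (N' 0 : ℤ) * (q : ℤ) ^ (h + h - 1) * ((q : ℤ) - 1) := by
      linear_combination key
    have hq1z : ((q : ℤ)) - 1 ≠ 0 := by
      have : (2 : ℤ) ≤ (q : ℤ) := by exact_mod_cast hq2
      omega
    have hCz : (((n / q : ℕ) : ℤ)) ^ 2 = (N' 0 : ℤ) * (q : ℤ) ^ (h + h - 1) :=
      mul_right_cancel₀ hq1z hfinalz
    have hCn : (n / q) ^ 2 = N' 0 * q ^ (h + h - 1) := by exact_mod_cast hCz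
    -- conclude q ∣ d^2
    have hNq : N' 0 * q = d ^ 2 := by
      have hpow2 : q ^ (h + h - 1) = q ^ (h - 1) * q ^ (h - 1) * q := by
        rw [← pow_add, ← pow_succ]
        congr 1
        omega
      apply Nat.eq_of_mul_eq_mul_left (show 0 < q ^ (h - 1) * q ^ (h - 1) by positivity)
      calc q ^ (h - 1) * q ^ (h - 1) * (N' 0 * q)
          = N' 0 * (q ^ (h - 1) * q ^ (h - 1) * q) := by ring
        _ = N' 0 * q ^ (h + h - 1) := by rw [hpow2]
        _ = (n / q) ^ 2 := hCn.symm
        _ = (q ^ (h - 1) * d) ^ 2 := by rw [hlam]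
        _ = q ^ (h - 1) * q ^ (h - 1) * d ^ 2 := by ring
    have hqd2 : q ∣ d ^ 2 := ⟨N' 0, by rw [← hNq]; ring⟩
    -- p-adic contradiction
    obtain ⟨m0, hm0⟩ := hv
    have hpm0 : ¬ p ∣ m0 := by
      intro hdvd
      apply hv'
      rw [hm0, pow_succ]
      exact mul_dvd_mul_left _ hdvd
    have hdd : d = p ^ (v - u * h) * m0 := by
      have hn' : n = q ^ h * (p ^ (v - u * h) * m0) := by
        rw [hq, ← pow_mul, hm0, ← mul_assoc, ← pow_add]
        congr 2
        omega
      rw [hddef, hn', Nat.mul_div_cancel_left _ (by positivity)]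
    have hdvd2 : p ^ u ∣ p ^ (2 * (v - u * h)) * m0 ^ 2 := by
      rw [← hq]
      have : d ^ 2 = p ^ (2 * (v - u * h)) * m0 ^ 2 := by
        rw [hdd, mul_pow, ← pow_mul, mul_comm (v - u * h) 2]
      rw [← this]
      exact hqd2
    have hcop : (p ^ u).Coprime (m0 ^ 2) :=
      Nat.Coprime.pow u 2 ((Nat.Prime.coprime_iff_not_dvd hp).mpr hpm0)
    have hle : p ^ u ∣ p ^ (2 * (v - u * h)) :=
      hcop.dvd_of_dvd_mul_right hdvd2
    have := (Nat.pow_dvd_pow_iff_le_right hp.one_lt).mp hle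
    omega
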